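/- Let g be a finite-dimensional complex semisimple Lie algebra with Killing form κ, and let w ∈ g be a nonzero element such that ad(w) is nilpotent. Set n_g(w) = {x ∈ g : ⁅x,w⁆ ∈ ℂ·w} and w^⊥ = {y ∈ g : κ(y,w) = 0}. Then n_g(w) ⊆ w^⊥; consequently, for every linear subspace r of g, the subspace r + n_g(w) is contained in w^⊥ if and only if r ⊆ w^⊥. -/

import Mathlib

open Pointwise in
/-- For a nonzero ad-nilpotent element `w` of a complex semisimple Lie algebra `g`,
the stabilizer `n_g(w) = {x | ⁅x, w⁆ ∈ ℂ • w}` is contained in the Killing-orthogonal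
complement `w^⊥` of `w`; consequently, for every linear subspace `r` of `g`,
`r + n_g(w) ⊆ w^⊥` if and only if `r ⊆ w^⊥`. -/
theorem stabilizer_subset_killingOrthogonal
    (g : Type*) [LieRing g] [LieAlgebra ℂ g] [FiniteDimensional ℂ g]
    [LieAlgebra.IsSemisimple ℂ g]
    (w : g) (hw : w ≠ 0) (hnil : IsNilpotent (LieAlgebra.ad ℂ g w)) :
    {x : g | ∃ c : ℂ, ⁅x, w⁆ = c • w} ⊆ {y : g | killingForm ℂ g y w = 0} ∧
    ∀ r : Submodule ℂ g,
      ((r : Set g) + {x : g | ∃ c : ℂ, ⁅x, w⁆ = c • w} ⊆ {y : g | killingForm ℂ g y w = 0}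
        ↔ (r : Set g) ⊆ {y : g | killingForm ℂ g y w = 0}) := by
  have key : {x : g | ∃ c : ℂ, ⁅x, w⁆ = c • w} ⊆ {y : g | killingForm ℂ g y w = 0} := by
    rintro x ⟨c, hc⟩
    set A := LieAlgebra.ad ℂ g x with hA
    set B := LieAlgebra.ad ℂ g w with hB
    have hcomm : A * B - B * A = c • B := by
      ext y
      simp only [A, B, LinearMap.sub_apply, Module.End.mul_apply, LinearMap.smul_apply,
        LieAlgebra.ad_apply]
      rw [← smul_lie, ← hc, leibniz_lie, add_sub_cancel_right]
    have hk : killingForm ℂ g x w = LinearMap.trace ℂ g (A * B) :=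
      killingForm_apply_apply ℂ g x w
    rcases eq_or_ne c 0 with rfl | hc0
    · -- A and B commute, B nilpotent ⇒ A*B nilpotent ⇒ trace = 0
      have hAB : Commute A B := by
        have := hcomm; rw [zero_smul] at this
        exact sub_eq_zero.mp this
      have : IsNilpotent (A * B) := hAB.isNilpotent_mul_left hnil
      have := LinearMap.isNilpotent_trace_of_isNilpotent this
      rw [Set.mem_setOf_eq, hk]
      exact this.eq_zero
    · -- c ≠ 0: c • trace(A*B) = trace(A*(A*B - B*A)) = 0
      have h1 : c • LinearMap.trace ℂ g (A * B) = 0 := by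
        have : A * (c • B) = A * (A * B - B * A) := by rw [hcomm]
        have h2 : LinearMap.trace ℂ g (A * (c • B)) =
            LinearMap.trace ℂ g (A * (A * B) - A * (B * A)) := by
          rw [this, mul_sub]
        rw [mul_smul_comm, map_smul, map_sub] at h2
        have h3 : LinearMap.trace ℂ g (A * (A * B)) = LinearMap.trace ℂ g (A * (B * A)) := by
          conv_rhs => rw [← mul_assoc, LinearMap.trace_mul_comm]
        rw [h3, sub_self] at h2
        exact h2
      rw [Set.mem_setOf_eq, hk]
      exact (smul_eq_zero.mp h1).resolve_left hc0
  refine ⟨key, fun r => ?_⟩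
  constructor
  · intro h x hx
    have : x ∈ (r : Set g) + {x : g | ∃ c : ℂ, ⁅x, w⁆ = c • w} :=
      ⟨x, hx, 0, ⟨0, by simp⟩, add_zero x⟩
    exact h this
  · rintro h _ ⟨a, ha, b, hb, rfl⟩
    have h1 : killingForm ℂ g a w = 0 := h ha
    have h2 : killingForm ℂ g b w = 0 := key hb
    simp only [Set.mem_setOf_eq, map_add, LinearMap.add_apply, h1, h2, add_zero]
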